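/- The maximum of the prefix exchange distance over all permutations of {1,…,n} equals ⌊3(n−1)/2⌋, for n ≥ 1. -/

import Mathlib

open Equiv Finset Filter
open scoped Classical

noncomputable section

/-- Number of fixed points of a permutation. -/
def c1 {n : ℕ} (π : Equiv.Perm (Fin n)) : ℕ :=
  (Finset.univ.filter fun i => π i = i).card

/-- Number of cycles of length at least 2 of a permutation. -/
def c2 {n : ℕ} (π : Equiv.Perm (Fin n)) : ℕ := π.cycleType.card

/-- The prefix exchange distance, given by the Akers–Krishnamurthy formula. -/
def pexc {n : ℕ} (π : Equiv.Perm (Fin n)) : ℕ :=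
  n + c2 π - c1 π - (if ∀ i : Fin n, (i : ℕ) = 0 → π i = i then 0 else 2)

/-- Whitney numbers of the second kind for the star poset. -/
def W (n k : ℕ) : ℕ :=
  (Finset.univ.filter fun π : Equiv.Perm (Fin n) => pexc π = k).card

lemma c1_add_support {n : ℕ} (π : Equiv.Perm (Fin n)) : c1 π + π.support.card = n := by
  classical
  have hs : π.support = univ.filter fun i => ¬ π i = i := by
    ext i; simp [Equiv.Perm.mem_support]
  unfold c1
  rw [hs]
  have h := Finset.card_filter_add_card_filter_not (s := (univ : Finset (Fin n)))
    (p := fun i => π i = i)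
  simpa using h

lemma two_c2_le {n : ℕ} (π : Equiv.Perm (Fin n)) : 2 * c2 π ≤ π.support.card := by
  have h := Multiset.card_nsmul_le_sum (s := π.cycleType) (a := 2)
    (fun x hx => Equiv.Perm.two_le_of_mem_cycleType hx)
  rw [Equiv.Perm.sum_cycleType] at h
  simpa [c2, mul_comm] using h

lemma pexc_le {n : ℕ} (hn : 1 ≤ n) (π : Equiv.Perm (Fin n)) : pexc π ≤ 3 * (n - 1) / 2 := by
  have h1 := c1_add_support π
  have h2 := two_c2_le π
  unfold pexc
  split_ifs with h
  · have h0 : π ⟨0, hn⟩ = ⟨0, hn⟩ := h _ rfl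
    have hc1 : 1 ≤ c1 π := by
      apply Finset.card_pos.mpr
      exact ⟨⟨0, hn⟩, by simp [h0]⟩
    omega
  · omega

lemma prod_fix {α : Type*} (l : List (Equiv.Perm α)) (x : α) (h : ∀ σ ∈ l, σ x = x) :
    l.prod x = x := by
  induction l with
  | nil => simp
  | cons a t ih =>
      rw [List.prod_cons, Equiv.Perm.mul_apply, ih (fun σ hσ => h σ (List.mem_cons_of_mem _ hσ)),
        h a List.mem_cons_self]

lemma even_case {n : ℕ} (m : ℕ) (hm : 1 ≤ m) (h : n = 2 * m) :
    ∃ π : Equiv.Perm (Fin n), c2 π = m ∧ c1 π = 0 ∧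
      π ⟨0, by omega⟩ ≠ ⟨0, by omega⟩ := by
  subst h
  obtain ⟨m', rfl⟩ : ∃ m', m = m' + 1 := ⟨m - 1, by omega⟩
  set m := m' + 1
  have hlt : ∀ k : Fin m, 2 * (k : ℕ) + 1 < 2 * m := fun k => by omega
  let a : Fin m → Fin (2 * m) := fun k => ⟨2 * k, by omega⟩
  let b : Fin m → Fin (2 * m) := fun k => ⟨2 * k + 1, by omega⟩
  have hab : ∀ k, a k ≠ b k := by intro k; simp [a, b, Fin.ext_iff]
  let f : Fin m → Equiv.Perm (Fin (2 * m)) := fun k => Equiv.swap (a k) (b k)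
  let l := List.ofFn f
  have hcyc : ∀ σ ∈ l, σ.IsCycle := by
    intro σ hσ
    rw [List.mem_ofFn] at hσ
    obtain ⟨k, rfl⟩ := hσ
    exact Equiv.Perm.isCycle_swap (hab k)
  have hdisj : l.Pairwise Equiv.Perm.Disjoint := by
    rw [List.pairwise_ofFn]
    intro i j hij
    rw [Equiv.Perm.disjoint_iff_disjoint_support, Equiv.Perm.support_swap (hab i),
      Equiv.Perm.support_swap (hab j)]
    rw [Fin.lt_def] at hij
    simp only [Finset.disjoint_insert_left, Finset.disjoint_insert_right,
      Finset.disjoint_singleton, Finset.mem_insert, Finset.mem_singleton]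
    simp [a, b, Fin.ext_iff]; omega
  have hct : (l.prod).cycleType = ↑(l.map (Finset.card ∘ Equiv.Perm.support)) :=
    Equiv.Perm.cycleType_eq l rfl hcyc hdisj
  refine ⟨l.prod, ?_, ?_, ?_⟩
  · show Multiset.card (l.prod).cycleType = m
    rw [hct, show l = List.ofFn f from rfl]
    simp only [Multiset.coe_card, List.length_map, List.length_ofFn]
  · have hs : (l.prod).support.card = 2 * m := by
      rw [← Equiv.Perm.sum_cycleType, hct, show l = List.ofFn f from rfl]
      simp only [Multiset.sum_coe, List.map_ofFn, List.sum_ofFn, Function.comp_apply]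
      have h2 : ∑ x : Fin m, (f x).support.card = ∑ _x : Fin m, 2 :=
        Finset.sum_congr rfl fun k _ => Equiv.Perm.card_support_swap (hab k)
      rw [h2, Finset.sum_const, Finset.card_univ, Fintype.card_fin, smul_eq_mul]
      omega
    have := c1_add_support l.prod
    omega
  · have hrest : l.prod ⟨0, by omega⟩ = ⟨1, by omega⟩ := by
      have : l = f 0 :: List.ofFn (fun i : Fin m' => f i.succ) := by
        simp [l, List.ofFn_succ]
      rw [this, List.prod_cons, Equiv.Perm.mul_apply]
      rw [prod_fix]
      · show Equiv.swap (a 0) (b 0) _ = _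
        have ha0 : a 0 = ⟨0, by omega⟩ := by simp [a, Fin.ext_iff]
        have hb0 : b 0 = ⟨1, by omega⟩ := by simp [b, Fin.ext_iff]
        rw [ha0, hb0, Equiv.swap_apply_left]
      · intro σ hσ
        rw [List.mem_ofFn] at hσ
        obtain ⟨k, rfl⟩ := hσ
        apply Equiv.swap_apply_of_ne_of_ne <;> simp [a, b, Fin.ext_iff, Fin.val_succ]
    rw [hrest]
    simp [Fin.ext_iff]

lemma odd_case {n : ℕ} (m : ℕ) (h : n = 2 * m + 1) :
    ∃ π : Equiv.Perm (Fin n), c2 π = m ∧ c1 π = 1 ∧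
      ∀ i : Fin n, (i : ℕ) = 0 → π i = i := by
  subst h
  let a : Fin m → Fin (2 * m + 1) := fun k => ⟨2 * k + 1, by omega⟩
  let b : Fin m → Fin (2 * m + 1) := fun k => ⟨2 * k + 2, by omega⟩
  have hab : ∀ k, a k ≠ b k := by intro k; simp [a, b, Fin.ext_iff]
  let f : Fin m → Equiv.Perm (Fin (2 * m + 1)) := fun k => Equiv.swap (a k) (b k)
  let l := List.ofFn f
  have hcyc : ∀ σ ∈ l, σ.IsCycle := by
    intro σ hσ
    rw [List.mem_ofFn] at hσ
    obtain ⟨k, rfl⟩ := hσ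
    exact Equiv.Perm.isCycle_swap (hab k)
  have hdisj : l.Pairwise Equiv.Perm.Disjoint := by
    rw [List.pairwise_ofFn]
    intro i j hij
    rw [Equiv.Perm.disjoint_iff_disjoint_support, Equiv.Perm.support_swap (hab i),
      Equiv.Perm.support_swap (hab j)]
    rw [Fin.lt_def] at hij
    simp only [Finset.disjoint_insert_left, Finset.disjoint_insert_right,
      Finset.disjoint_singleton, Finset.mem_insert, Finset.mem_singleton]
    simp [a, b, Fin.ext_iff]; omega
  have hct : (l.prod).cycleType = ↑(l.map (Finset.card ∘ Equiv.Perm.support)) :=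
    Equiv.Perm.cycleType_eq l rfl hcyc hdisj
  refine ⟨l.prod, ?_, ?_, ?_⟩
  · show Multiset.card (l.prod).cycleType = m
    rw [hct, show l = List.ofFn f from rfl]
    simp only [Multiset.coe_card, List.length_map, List.length_ofFn]
  · have hs : (l.prod).support.card = 2 * m := by
      rw [← Equiv.Perm.sum_cycleType, hct, show l = List.ofFn f from rfl]
      simp only [Multiset.sum_coe, List.map_ofFn, List.sum_ofFn, Function.comp_apply]
      have h2 : ∑ x : Fin m, (f x).support.card = ∑ _x : Fin m, 2 :=
        Finset.sum_congr rfl fun k _ => Equiv.Perm.card_support_swap (hab k)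
      rw [h2, Finset.sum_const, Finset.card_univ, Fintype.card_fin, smul_eq_mul]
      omega
    have := c1_add_support l.prod
    omega
  · intro i hi
    have : i = ⟨0, by omega⟩ := by simp [Fin.ext_iff, hi]
    rw [this]
    apply prod_fix
    intro σ hσ
    rw [List.mem_ofFn] at hσ
    obtain ⟨k, rfl⟩ := hσ
    apply Equiv.swap_apply_of_ne_of_ne <;> simp [a, b, Fin.ext_iff]

theorem stmt1 (n : ℕ) (hn : 1 ≤ n) :
    Finset.univ.sup (fun π : Equiv.Perm (Fin n) => pexc π) = 3 * (n - 1) / 2 := by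
  apply le_antisymm
  · exact Finset.sup_le fun π _ => pexc_le hn π
  · rcases Nat.even_or_odd n with ⟨m, hm⟩ | ⟨m, hm⟩
    · have hm' : n = 2 * m := by omega
      have hm1 : 1 ≤ m := by omega
      obtain ⟨π, hc2, hc1, hne⟩ := even_case m hm1 hm'
      have hp : pexc π = 3 * (n - 1) / 2 := by
        unfold pexc
        rw [hc2, hc1, if_neg]
        · omega
        · push_neg
          exact ⟨⟨0, by omega⟩, rfl, hne⟩
      rw [← hp]
      exact Finset.le_sup (Finset.mem_univ π)
    · obtain ⟨π, hc2, hc1, hfix⟩ := odd_case m hm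
      have hp : pexc π = 3 * (n - 1) / 2 := by
        unfold pexc
        rw [hc2, hc1, if_pos hfix]
        omega
      rw [← hp]
      exact Finset.le_sup (Finset.mem_univ π)
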